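/- Let L be a p.c.f. self-similar structure with surjection π satisfying shift-descent, and let α ≠ β be points of π(C) with π⁻¹(α) = \bar{z}Sₙ…S₂S₁ and π⁻¹(β) = \bar{z}Tₘ…T₂T₁ (same recurring tail \bar{z}), where each S_j, T_j ⊆ X and the notation denotes the set of words \bar{z}ξₙ…ξ₁ with ξ_j ∈ S_j. If S_{n-k} = T_{m-k} for all 0 ≤ k < N, then either S_{n-N} = T_{m-N} or S_{n-N} ∩ T_{m-N} = ∅. -/

import Mathlib

/-- Appending the letter `i` at the right end of a left-infinite word. -/
def appendLetter {X : Type*} (i : X) (w : ℕ → X) : ℕ → X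
  | 0 => i
  | n + 1 => w n

/-- The left-infinite periodic word `\bar z = …zzz`. -/
def periodicWord {X : Type*} (z : List X) (hz : 0 < z.length) : ℕ → X :=
  fun n => z.get ⟨n % z.length, Nat.mod_lt _ hz⟩

/-- The "product set" `\bar z Sₙ…S₂S₁` of left-infinite words: position `j+1`
(index `j`) carries a letter of `S j`, and beyond position `n` the word is the
periodic word `\bar z`. -/
def classSet {X : Type*} (z : List X) (hz : 0 < z.length) (n : ℕ)
    (S : Fin n → Set X) : Set (ℕ → X) :=
  {ξ | (∀ k : ℕ, ξ (n + k) = periodicWord z hz k) ∧ ∀ j : Fin n, ξ j.val ∈ S j}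

/-- Extend a word `u` below by the first `r` letters of `v`. -/
def extendBelow {X : Type*} (v : ℕ → X) (r : ℕ) (u : ℕ → X) : ℕ → X :=
  fun j => if j < r then v j else u (j - r)

lemma extendBelow_self {X : Type*} (v : ℕ → X) (r : ℕ) :
    extendBelow v r (fun k => v (k + r)) = v := by
  funext j
  simp only [extendBelow]
  split <;> [rfl; (congr 1; omega)]

lemma pi_shiftIter {X K : Type*} (π : (ℕ → X) → K)
    (hshift : ∀ ξ η : ℕ → X, π ξ = π η →
      π (fun k => ξ (k + 1)) = π (fun k => η (k + 1))) :
    ∀ (r : ℕ) (ξ η : ℕ → X), π ξ = π η →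
      π (fun k => ξ (k + r)) = π (fun k => η (k + r)) := by
  intro r
  induction r with
  | zero => intro ξ η h; simpa using h
  | succ r ih =>
      intro ξ η h
      exact ih _ _ (hshift _ _ h)

lemma pi_extendBelow {X K : Type*} (π : (ℕ → X) → K) (F : X → K → K)
    (hrel : ∀ (i : X) (ξ : ℕ → X), F i (π ξ) = π (appendLetter i ξ)) :
    ∀ (r : ℕ) (v u₁ u₂ : ℕ → X), π u₁ = π u₂ →
      π (extendBelow v r u₁) = π (extendBelow v r u₂) := by
  intro r
  induction r with
  | zero =>
      intro v u₁ u₂ h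
      have e : ∀ u : ℕ → X, extendBelow v 0 u = u := by
        intro u; funext j; simp [extendBelow]
      rw [e, e]; exact h
  | succ r ih =>
      intro v u₁ u₂ h
      have e : ∀ u : ℕ → X, extendBelow v (r+1) u
          = appendLetter (v 0) (extendBelow (fun j => v (j+1)) r u) := by
        intro u; funext j
        cases j with
        | zero => simp [extendBelow, appendLetter]
        | succ j =>
            simp only [extendBelow, appendLetter]
            split <;> split <;> first | rfl | omega | (congr 1; omega)
      rw [e, e, ← hrel, ← hrel, ih _ _ _ h]

lemma aux_incl {X K : Type*}
    (π : (ℕ → X) → K) (F : X → K → K)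
    (hrel : ∀ (i : X) (ξ : ℕ → X), F i (π ξ) = π (appendLetter i ξ))
    (hshift : ∀ ξ η : ℕ → X, π ξ = π η →
      π (fun k => ξ (k + 1)) = π (fun k => η (k + 1)))
    (z : List X) (hz : 0 < z.length) (n m : ℕ)
    (S : Fin n → Set X) (T : Fin m → Set X)
    (α β : K)
    (hα : π ⁻¹' {α} = classSet z hz n S)
    (hβ : π ⁻¹' {β} = classSet z hz m T)
    (N : ℕ) (hNn : N < n) (hNm : N < m)
    (hagree : ∀ k, k < N →
      S ⟨n - 1 - k, by have := hNn; omega⟩ = T ⟨m - 1 - k, by have := hNn; omega⟩)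
    (ξ₀ : ℕ → X) (hξ₀ : ξ₀ ∈ classSet z hz n S)
    (η₀ : ℕ → X) (hη₀ : η₀ ∈ classSet z hz m T)
    (x : X) (hxS : x ∈ S ⟨n - 1 - N, by have := hNn; omega⟩) (hxT : x ∈ T ⟨m - 1 - N, by have := hNn; omega⟩)
    (y : X) (hyS : y ∈ S ⟨n - 1 - N, by have := hNn; omega⟩) :
    y ∈ T ⟨m - 1 - N, by have := hNn; omega⟩ := by
  set p := n - 1 - N with hp
  set q := m - 1 - N with hq
  -- helper for transporting along hagree with different index representations
  have key : ∀ (a : ℕ) (ha : a < n) (b : ℕ) (hb : b < m) (k : ℕ), k < N →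
      a = n - 1 - k → b = m - 1 - k → S ⟨a, ha⟩ = T ⟨b, hb⟩ := by
    rintro a ha b hb k hk rfl rfl
    exact hagree k hk
  -- ξ with letter c at position p
  have mem_xi : ∀ c : X, c ∈ S ⟨p, by omega⟩ →
      (fun j => if j = p then c else ξ₀ j) ∈ classSet z hz n S := by
    intro c hc
    refine ⟨fun k => ?_, fun j => ?_⟩
    · have : n + k ≠ p := by omega
      simp only [this, if_false]
      exact hξ₀.1 k
    · by_cases hj : (j : ℕ) = p
      · simp only [hj, if_true]
        have : j = ⟨p, by omega⟩ := by ext; exact hj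
        rw [this]; exact hc
      · simp only [hj, if_false]
        exact hξ₀.2 j
  set ξx : ℕ → X := fun j => if j = p then x else ξ₀ j with hξx
  set ξy : ℕ → X := fun j => if j = p then y else ξ₀ j with hξy
  have hξxmem := mem_xi x hxS
  have hξymem := mem_xi y hyS
  -- the hybrid word η
  set η : ℕ → X := fun j => if j < q then η₀ j else if j < m then ξx (j - q + p) else η₀ j
    with hη
  have hηmem : η ∈ classSet z hz m T := by
    refine ⟨fun k => ?_, fun j => ?_⟩
    · have h1 : ¬ (m + k < q) := by omega
      have h2 : ¬ (m + k < m) := by omega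
      simp only [hη, h1, h2, if_false]
      exact hη₀.1 k
    · rcases lt_trichotomy (j : ℕ) q with hj | hj | hj
      · simp only [hη, hj, if_true]
        exact hη₀.2 j
      · have h1 : ¬ ((j : ℕ) < q) := by omega
        have h2 : (j : ℕ) < m := j.isLt
        have h3 : (j : ℕ) - q + p = p := by omega
        simp only [hη, h1, h2, if_false, if_true, h3, hξx, if_pos rfl]
        have : j = ⟨q, by omega⟩ := by ext; exact hj
        rw [this]; exact hxT
      · have h1 : ¬ ((j : ℕ) < q) := by omega
        have h2 : (j : ℕ) < m := j.isLt
        have h4 : (j : ℕ) - q + p ≠ p := by omega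
        simp only [hη, h1, h2, if_false, if_true, hξx, h4]
        have h5 : (j : ℕ) - q + p < n := by omega
        have := hξ₀.2 ⟨(j : ℕ) - q + p, h5⟩
        have hk : N - 1 - ((j : ℕ) - q - 1) < N := by omega
        have e := key ((j : ℕ) - q + p) h5 (j : ℕ) j.isLt
          (N - 1 - ((j : ℕ) - q - 1)) (by omega) (by omega) (by omega)
        rw [← e]
        exact this
  -- computing π values
  have hπξx : π ξx = α := by
    have : ξx ∈ π ⁻¹' {α} := by rw [hα]; exact hξxmem
    simpa using this
  have hπξy : π ξy = α := by
    have : ξy ∈ π ⁻¹' {α} := by rw [hα]; exact hξymem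
    simpa using this
  have hπη : π η = β := by
    have : η ∈ π ⁻¹' {β} := by rw [hβ]; exact hηmem
    simpa using this
  -- the shifts agree: σ^p ξx = σ^q η
  have hshifts_eq : (fun k => ξx (k + p)) = (fun k => η (k + q)) := by
    funext k
    by_cases hk : k ≤ N
    · have h1 : ¬ (k + q < q) := by omega
      have h2 : k + q < m := by omega
      simp only [hη, h1, h2, if_false, if_true]
      congr 1
      omega
    · have h1 : ¬ (k + q < q) := by omega
      have h2 : ¬ (k + q < m) := by omega
      simp only [hη, h1, h2, if_false]
      have e1 : ξx (k + p) = ξ₀ (k + p) := by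
        simp only [hξx]
        have : k + p ≠ p := by omega
        simp [this, show k ≠ 0 by omega]
      rw [e1]
      have e2 : k + p = n + (k - (N+1)) := by omega
      have e3 : k + q = m + (k - (N+1)) := by omega
      rw [e2, e3, hξ₀.1, hη₀.1]
  -- π (σ^p ξy) = π (σ^q η)
  have step1 : π (fun k => ξy (k + p)) = π (fun k => η (k + q)) := by
    rw [← hshifts_eq]
    exact pi_shiftIter π hshift p ξy ξx (by rw [hπξy, hπξx])
  -- rebuild the class-T word with y
  set w : ℕ → X := extendBelow η q (fun k => ξy (k + p)) with hw
  have hπw : π w = β := by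
    have := pi_extendBelow π F hrel q η _ _ step1
    rw [hw, this, extendBelow_self, hπη]
  have hwmem : w ∈ classSet z hz m T := by
    have : w ∈ π ⁻¹' {β} := by simp [hπw]
    rwa [hβ] at this
  have := hwmem.2 ⟨q, by omega⟩
  simp only [hw, extendBelow, lt_irrefl, if_false, Nat.sub_self] at this
  simpa [hξy] using this

/-- let `α ≠ β` be points of `π(C)` of a p.c.f. self-similar structure
with shift-descent, with `π⁻¹(α) = \bar z Sₙ…S₁` and `π⁻¹(β) = \bar z Tₘ…T₁` (same
recurring tail).  If `S_{n-k} = T_{m-k}` for all `0 ≤ k < N`, then either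
`S_{n-N} = T_{m-N}` or `S_{n-N} ∩ T_{m-N} = ∅`. -/
theorem class_sets_equal_or_disjoint {X K : Type*} [Fintype X]
    [TopologicalSpace X] [DiscreteTopology X]
    [TopologicalSpace K] [CompactSpace K] [TopologicalSpace.MetrizableSpace K]
    (π : (ℕ → X) → K) (hcont : Continuous π) (hsurj : Function.Surjective π)
    (F : X → K → K) (hFc : ∀ i, Continuous (F i)) (hFinj : ∀ i, Function.Injective (F i))
    (hrel : ∀ (i : X) (ξ : ℕ → X), F i (π ξ) = π (appendLetter i ξ))
    (hshift : ∀ ξ η : ℕ → X, π ξ = π η →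
      π (fun k => ξ (k + 1)) = π (fun k => η (k + 1)))
    (z : List X) (hz : 0 < z.length) (n m : ℕ)
    (S : Fin n → Set X) (T : Fin m → Set X)
    (α β : K) (hαβ : α ≠ β)
    (hα : π ⁻¹' {α} = classSet z hz n S)
    (hβ : π ⁻¹' {β} = classSet z hz m T)
    (N : ℕ) (hNn : N < n) (hNm : N < m)
    (hagree : ∀ k, k < N →
      S ⟨n - 1 - k, by omega⟩ = T ⟨m - 1 - k, by omega⟩) :
    S ⟨n - 1 - N, by omega⟩ = T ⟨m - 1 - N, by omega⟩ ∨
    S ⟨n - 1 - N, by omega⟩ ∩ T ⟨m - 1 - N, by omega⟩ = ∅ := by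
  by_cases hdisj : S ⟨n - 1 - N, by omega⟩ ∩ T ⟨m - 1 - N, by omega⟩ = ∅
  · exact Or.inr hdisj
  · left
    obtain ⟨x, hxS, hxT⟩ := Set.nonempty_iff_ne_empty.mpr hdisj
    obtain ⟨ξ₀, hπξ₀⟩ := hsurj α
    have hξ₀ : ξ₀ ∈ classSet z hz n S := by
      rw [← hα]; simp [hπξ₀]
    obtain ⟨η₀, hπη₀⟩ := hsurj β
    have hη₀ : η₀ ∈ classSet z hz m T := by
      rw [← hβ]; simp [hπη₀]
    ext y
    constructor
    · intro hy
      exact aux_incl π F hrel hshift z hz n m S T α β hα hβ N hNn hNm hagree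
        ξ₀ hξ₀ η₀ hη₀ x hxS hxT y hy
    · intro hy
      exact aux_incl π F hrel hshift z hz m n T S β α hβ hα N hNm hNn
        (fun k hk => (hagree k hk).symm) η₀ hη₀ ξ₀ hξ₀ x hxT hxS y hy
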